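/- Let (ψ_j)_{j≥1} be a real sequence and η ∈ ℝ such that (1/n) ∑_{j=1}^n ψ_j → η as n → ∞, and let G : [0,1] → ℝ be a Lipschitz function. Then for every t ∈ [0,1], (1/n) ∑_{j=1}^{[nt]} G(j/n) ψ_j → η ∫_0^t G(x) dx as n → ∞. -/

import Mathlib

open Filter Topology

private lemma abel_aux (a e : ℕ → ℝ) (m : ℕ) :
    ∑ j ∈ Finset.Icc 1 m, a j * e j
      = a m * (∑ j ∈ Finset.Icc 1 m, e j)
        - ∑ j ∈ Finset.Ico 1 m, (a (j+1) - a j) * (∑ i ∈ Finset.Icc 1 j, e i) := by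
  induction m with
  | zero => simp
  | succ m ih =>
    rcases Nat.eq_zero_or_pos m with hm | hm
    · subst hm; simp
    rw [Finset.sum_Icc_succ_top (Nat.le_add_left 1 m) (fun j => a j * e j), ih,
      Finset.sum_Ico_succ_top hm,
      Finset.sum_Icc_succ_top (Nat.le_add_left 1 m) e]
    ring

/-- The Cesàro-type lemma (19)–(20) in the proof of **Theorem 9** of Peligrad–Utev,
"Invariance principle for stochastic processes with short memory": if
`(1/n) ∑_{j=1}^n ψ_j → η` and `G : [0,1] → ℝ` is Lipschitz, then for every `t ∈ [0,1]`,
`(1/n) ∑_{j=1}^{[nt]} G(j/n) ψ_j → η ∫_0^t G(x) dx`. -/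
theorem stmt14
    (ψ : ℕ → ℝ) (η : ℝ)
    (hψ : Tendsto (fun n : ℕ => (1 / (n : ℝ)) * ∑ j ∈ Finset.Icc 1 n, ψ j)
      atTop (𝓝 η))
    (G : ℝ → ℝ) (K : NNReal) (hG : LipschitzOnWith K G (Set.Icc 0 1)) :
    ∀ t ∈ Set.Icc (0 : ℝ) 1,
      Tendsto (fun n : ℕ =>
          (1 / (n : ℝ)) * ∑ j ∈ Finset.Icc 1 ⌊(n : ℝ) * t⌋₊, G ((j : ℝ) / n) * ψ j)
        atTop (𝓝 (η * ∫ x in (0 : ℝ)..t, G x)) := by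
  intro t ht
  obtain ⟨ht0, ht1⟩ := ht
  rcases eq_or_lt_of_le ht0 with h0 | h0
  · rw [← h0]
    simpa using (tendsto_const_nhds : Tendsto (fun _ : ℕ => (0:ℝ)) atTop (𝓝 0))
  have hGc : ContinuousOn G (Set.Icc 0 1) := hG.continuousOn
  set B : ℝ := |G 0| + K with hBdef
  have hBnn : (0:ℝ) ≤ B := by positivity
  have hGb : ∀ x ∈ Set.Icc (0:ℝ) 1, |G x| ≤ B := by
    intro x hx
    have h1 : dist (G x) (G 0) ≤ K * dist x 0 :=
      hG.dist_le_mul x hx 0 (Set.left_mem_Icc.mpr zero_le_one)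
    rw [Real.dist_eq, Real.dist_eq, sub_zero] at h1
    have hx1 : |x| ≤ 1 := abs_le.mpr ⟨by linarith [hx.1], hx.2⟩
    have h2 : (K:ℝ) * |x| ≤ K * 1 := by
      apply mul_le_mul_of_nonneg_left hx1 K.coe_nonneg
    calc |G x| = |(G x - G 0) + G 0| := by ring_nf
      _ ≤ |G x - G 0| + |G 0| := abs_add_le _ _
      _ ≤ K * |x| + |G 0| := by linarith
      _ ≤ B := by rw [hBdef]; linarith
  -- floor facts
  set m : ℕ → ℕ := fun n => ⌊(n:ℝ) * t⌋₊ with hmdef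
  have hm_le : ∀ n : ℕ, (m n : ℝ) ≤ n * t := fun n =>
    Nat.floor_le (by positivity)
  have hm_gt : ∀ n : ℕ, (n:ℝ) * t < m n + 1 := fun n => Nat.lt_floor_add_one _
  have hmn : ∀ n : ℕ, m n ≤ n := by
    intro n
    have h1 : (m n : ℝ) ≤ n := le_trans (hm_le n)
      (by nlinarith [Nat.cast_nonneg (α := ℝ) n])
    exact_mod_cast h1
  have hm_top : Tendsto m atTop atTop :=
    tendsto_nat_floor_atTop.comp (tendsto_natCast_atTop_atTop.atTop_mul_const h0)
  -- partial sums of ψ - η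
  set T : ℕ → ℝ := fun k => ∑ j ∈ Finset.Icc 1 k, (ψ j - η) with hTdef
  have hT : Tendsto (fun n : ℕ => T n / n) atTop (𝓝 0) := by
    have heq : ∀ᶠ n : ℕ in atTop, (1 / (n : ℝ)) * (∑ j ∈ Finset.Icc 1 n, ψ j) - η
        = T n / n := by
      filter_upwards [eventually_ge_atTop 1] with n hn
      have hn0 : (0:ℝ) < n := by exact_mod_cast hn
      rw [hTdef]
      simp only [Finset.sum_sub_distrib, Finset.sum_const, Nat.card_Icc]
      field_simp
      simp [nsmul_eq_mul]
    have := hψ.sub (tendsto_const_nhds (x := η))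
    rw [sub_self] at this
    exact this.congr' heq
  set v : ℕ → ℝ := fun k => |T k| / k with hvdef
  have hv : Tendsto v atTop (𝓝 0) := by
    have := hT.abs
    rw [abs_zero] at this
    refine this.congr (fun n => ?_)
    rw [hvdef]
    simp [abs_div]
  have hv0 : v 0 = 0 := by simp [hvdef]
  have hvnn : ∀ k, 0 ≤ v k := fun k => by rw [hvdef]; positivity
  have hTv' : ∀ k : ℕ, 1 ≤ k → |∑ j ∈ Finset.Icc 1 k, (ψ j - η)| = k * v k := by
    intro k hk
    have hk0 : (0:ℝ) < k := by exact_mod_cast hk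
    show |T k| = k * v k
    simp only [hvdef]
    field_simp
  -- Cesàro for v over Icc 1 n
  have hC : Tendsto (fun n : ℕ => (1/(n:ℝ)) * ∑ j ∈ Finset.Icc 1 n, v j)
      atTop (𝓝 0) := by
    have hces := hv.cesaro
    have h1 : Tendsto (fun n : ℕ => ((n:ℝ)+1)⁻¹ * ∑ i ∈ Finset.range (n+1), v i)
        atTop (𝓝 0) := by
      have := hces.comp (tendsto_add_atTop_nat 1)
      refine this.congr (fun n => ?_)
      simp only [Function.comp]
      congr 1
      push_cast
      ring
    have h2 : Tendsto (fun n : ℕ => (1 + 1/(n:ℝ))) atTop (𝓝 1) := by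
      have := tendsto_one_div_atTop_nhds_zero_nat (𝕜 := ℝ)
      simpa using (tendsto_const_nhds (x := (1:ℝ))).add this
    have h3 := h2.mul h1
    rw [mul_zero] at h3
    refine h3.congr' ?_
    filter_upwards [eventually_ge_atTop 1] with n hn
    have hn0 : (0:ℝ) < n := by exact_mod_cast hn
    have hsum : ∑ j ∈ Finset.Icc 1 n, v j = ∑ i ∈ Finset.range (n+1), v i := by
      rw [Finset.range_eq_Ico, ← Finset.Ico_add_one_right_eq_Icc]
      rw [← Finset.sum_Ico_consecutive _ (Nat.zero_le 1) (by omega)]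
      simp [hv0]
    rw [hsum]
    have : (1 + 1/(n:ℝ)) * ((n:ℝ)+1)⁻¹ = 1/n := by field_simp
    rw [← mul_assoc, this]
  -- integrability
  have hint : ∀ a b : ℝ, 0 ≤ a → a ≤ b → b ≤ 1 →
      IntervalIntegrable G MeasureTheory.volume a b := by
    intro a b ha hab hb1
    exact (hGc.mono (Set.Icc_subset_Icc ha hb1)).intervalIntegrable_of_Icc hab
  -- Riemann sums
  have hA : Tendsto (fun n : ℕ => (1/(n:ℝ)) * ∑ j ∈ Finset.Icc 1 (m n), G ((j:ℝ)/n))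
      atTop (𝓝 (∫ x in (0:ℝ)..t, G x)) := by
    have key : ∀ n : ℕ, 1 ≤ n →
        |(1/(n:ℝ)) * ∑ j ∈ Finset.Icc 1 (m n), G ((j:ℝ)/n)
          - ∫ x in (0:ℝ)..t, G x| ≤ (K + B)/n := by
      intro n hn
      have hn0 : (0:ℝ) < n := by exact_mod_cast hn
      set M : ℕ := m n with hMdef
      have hMle : (M:ℝ) ≤ n*t := hm_le n
      have hMn : (M:ℝ) ≤ n := by exact_mod_cast hmn n
      have hMlt : (n:ℝ)*t < M+1 := hm_gt n
      have hMt : (M:ℝ)/n ≤ t := by rw [div_le_iff₀ hn0]; linarith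
      have hMnn : (0:ℝ) ≤ (M:ℝ)/n := by positivity
      have htM : t - (M:ℝ)/n ≤ 1/n := by
        rw [sub_le_iff_le_add, ← add_div, le_div_iff₀ hn0]
        linarith
      have hgrid : ∀ k : ℕ, k ≤ M → ((k:ℝ)/n) ∈ Set.Icc (0:ℝ) 1 := by
        intro k hk
        constructor
        · positivity
        · rw [div_le_one hn0]
          exact le_trans (by exact_mod_cast hk) hMn
      have hre : ∑ j ∈ Finset.Icc 1 M, G ((j:ℝ)/n)
          = ∑ k ∈ Finset.range M, G (((k:ℝ)+1)/n) := by
        rw [← Finset.Ico_add_one_right_eq_Icc, Finset.sum_Ico_eq_sum_range]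
        refine Finset.sum_congr rfl (fun k _ => ?_)
        have : ((1+k:ℕ):ℝ) = (k:ℝ)+1 := by push_cast; ring
        rw [this]
      have hintk : ∀ k : ℕ, k < M →
          IntervalIntegrable G MeasureTheory.volume ((k:ℝ)/n) (((k:ℝ)+1)/n) := by
        intro k hk
        have h1 : ((k:ℝ)+1)/n ≤ 1 := by
          have : (((k+1):ℕ):ℝ)/n ≤ 1 := (hgrid (k+1) hk).2
          push_cast at this; linarith
        apply hint _ _ (by positivity) (by gcongr; linarith) h1
      have hadj : ∑ k ∈ Finset.range M, (∫ x in ((k:ℝ)/n)..(((k:ℝ)+1)/n), G x)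
          = ∫ x in (0:ℝ)..((M:ℝ)/n), G x := by
        have h := intervalIntegral.sum_integral_adjacent_intervals
          (a := fun k : ℕ => (k:ℝ)/n) (μ := MeasureTheory.volume) (n := M)
          (f := G)
          (fun k hk => by
            show IntervalIntegrable G MeasureTheory.volume ((k:ℝ)/n) (((k+1:ℕ):ℝ)/n)
            have hc : (((k+1):ℕ):ℝ)/n = ((k:ℝ)+1)/n := by push_cast; ring
            rw [hc]; exact hintk k hk)
        simp only [Nat.cast_zero, zero_div, Nat.cast_add, Nat.cast_one] at h
        exact h
      have hterm : ∀ k ∈ Finset.range M,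
          |G (((k:ℝ)+1)/n) * (1/n) - ∫ x in ((k:ℝ)/n)..(((k:ℝ)+1)/n), G x|
            ≤ (K:ℝ)/n^2 := by
        intro k hk
        rw [Finset.mem_range] at hk
        have hk1 : k+1 ≤ M := hk
        have hc1 : (((k:ℝ))+1)/n ∈ Set.Icc (0:ℝ) 1 := by
          have := hgrid (k+1) hk1
          push_cast at this; exact this
        have hconst : G (((k:ℝ)+1)/n) * (1/n)
            = ∫ _x in ((k:ℝ)/n)..(((k:ℝ)+1)/n), G (((k:ℝ)+1)/n) := by
          rw [intervalIntegral.integral_const, smul_eq_mul]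
          rw [mul_comm]
          congr 1
          field_simp
          ring
        rw [hconst, ← intervalIntegral.integral_sub (intervalIntegrable_const) (hintk k hk)]
        have hlen : (((k:ℝ)+1)/n) - ((k:ℝ)/n) = 1/n := by field_simp; ring
        have := intervalIntegral.norm_integral_le_of_norm_le_const
          (a := (k:ℝ)/n) (b := ((k:ℝ)+1)/n) (C := (K:ℝ)/n)
          (f := fun x => G (((k:ℝ)+1)/n) - G x) ?_
        · rw [Real.norm_eq_abs] at this
          calc |∫ x in ((k:ℝ)/n)..(((k:ℝ)+1)/n), (G (((k:ℝ)+1)/n) - G x)|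
              ≤ (K:ℝ)/n * |(((k:ℝ)+1)/n) - ((k:ℝ)/n)| := this
            _ = (K:ℝ)/n * (1/n) := by rw [hlen]; norm_num
            _ = (K:ℝ)/n^2 := by ring
        · intro x hx
          rw [Set.uIoc_of_le (by gcongr <;> linarith)] at hx
          have hx01 : x ∈ Set.Icc (0:ℝ) 1 := by
            constructor
            · have := hx.1; have h2 : (0:ℝ) ≤ (k:ℝ)/n := by positivity
              linarith
            · exact le_trans hx.2 hc1.2
          have hd := hG.dist_le_mul _ hc1 _ hx01
          rw [Real.dist_eq, Real.dist_eq] at hd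
          rw [Real.norm_eq_abs]
          refine le_trans hd ?_
          have : |((k:ℝ)+1)/n - x| ≤ 1/n := by
            rw [abs_le]
            constructor
            · linarith [hx.2, hn0]
            · have := hx.1
              rw [← hlen]
              linarith
          calc (K:ℝ) * |((k:ℝ)+1)/n - x| ≤ (K:ℝ) * (1/n) :=
                mul_le_mul_of_nonneg_left this K.coe_nonneg
            _ = (K:ℝ)/n := by ring
      have htail : |∫ x in ((M:ℝ)/n)..t, G x| ≤ B * (1/n) := by
        have := intervalIntegral.norm_integral_le_of_norm_le_const
          (a := (M:ℝ)/n) (b := t) (C := B) (f := G) ?_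
        · rw [Real.norm_eq_abs] at this
          refine le_trans this ?_
          have : |t - (M:ℝ)/n| ≤ 1/n := by
            rw [abs_le]; constructor
            · have : (0:ℝ) ≤ 1/n := by positivity
              linarith [hMt]
            · exact htM
          exact mul_le_mul_of_nonneg_left this hBnn
        · intro x hx
          rw [Set.uIoc_of_le hMt] at hx
          rw [Real.norm_eq_abs]
          exact hGb x ⟨le_trans hMnn hx.1.le, le_trans hx.2 ht1⟩
      have hsplit : ∫ x in (0:ℝ)..t, G x
          = (∫ x in (0:ℝ)..((M:ℝ)/n), G x) + ∫ x in ((M:ℝ)/n)..t, G x :=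
        (intervalIntegral.integral_add_adjacent_intervals
          (hint 0 _ le_rfl hMnn (le_trans hMt ht1))
          (hint _ t (by positivity) hMt ht1)).symm
      have hmain : |(1/(n:ℝ)) * ∑ j ∈ Finset.Icc 1 M, G ((j:ℝ)/n)
          - ∫ x in (0:ℝ)..((M:ℝ)/n), G x| ≤ (K:ℝ)/n := by
        rw [hre, Finset.mul_sum, ← hadj]
        rw [← Finset.sum_sub_distrib]
        calc |∑ k ∈ Finset.range M, ((1/(n:ℝ)) * G (((k:ℝ)+1)/n)
                - ∫ x in ((k:ℝ)/n)..(((k:ℝ)+1)/n), G x)|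
            ≤ ∑ k ∈ Finset.range M, |(1/(n:ℝ)) * G (((k:ℝ)+1)/n)
                - ∫ x in ((k:ℝ)/n)..(((k:ℝ)+1)/n), G x| :=
              Finset.abs_sum_le_sum_abs _ _
          _ ≤ ∑ _k ∈ Finset.range M, (K:ℝ)/n^2 := by
              refine Finset.sum_le_sum (fun k hk => ?_)
              have := hterm k hk
              rw [mul_comm] at this
              exact this
          _ = M * ((K:ℝ)/n^2) := by rw [Finset.sum_const, Finset.card_range]; ring
          _ ≤ n * ((K:ℝ)/n^2) := by
              apply mul_le_mul_of_nonneg_right hMn (by positivity)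
          _ = (K:ℝ)/n := by field_simp
      calc |(1/(n:ℝ)) * ∑ j ∈ Finset.Icc 1 M, G ((j:ℝ)/n) - ∫ x in (0:ℝ)..t, G x|
          = |((1/(n:ℝ)) * ∑ j ∈ Finset.Icc 1 M, G ((j:ℝ)/n)
              - ∫ x in (0:ℝ)..((M:ℝ)/n), G x) - ∫ x in ((M:ℝ)/n)..t, G x| := by
            rw [hsplit]; congr 1; ring
        _ ≤ |(1/(n:ℝ)) * ∑ j ∈ Finset.Icc 1 M, G ((j:ℝ)/n)
              - ∫ x in (0:ℝ)..((M:ℝ)/n), G x| + |∫ x in ((M:ℝ)/n)..t, G x| :=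
            abs_sub _ _
        _ ≤ (K:ℝ)/n + B * (1/n) := add_le_add hmain htail
        _ = (K + B)/n := by ring
    rw [← tendsto_sub_nhds_zero_iff]
    apply squeeze_zero_norm' ?_ (tendsto_const_div_atTop_nhds_zero_nat (K + B))
    filter_upwards [eventually_ge_atTop 1] with n hn
    exact key n hn
  -- Abel part
  have hD : Tendsto (fun n : ℕ => (1/(n:ℝ)) * ∑ j ∈ Finset.Icc 1 (m n),
      G ((j:ℝ)/n) * (ψ j - η)) atTop (𝓝 0) := by
    have hlim : Tendsto (fun n : ℕ => B * v (m n)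
        + K * ((1/(n:ℝ)) * ∑ j ∈ Finset.Icc 1 n, v j)) atTop (𝓝 0) := by
      have l1 := (tendsto_const_nhds (x := B)).mul (hv.comp hm_top)
      have l2 := (tendsto_const_nhds (x := (K:ℝ))).mul hC
      simpa using l1.add l2
    apply squeeze_zero_norm' ?_ hlim
    filter_upwards [eventually_ge_atTop 1, hm_top.eventually_ge_atTop 1] with n hn hM1
    have hn0 : (0:ℝ) < n := by exact_mod_cast hn
    set M := m n with hMdef
    have hMn' : (M:ℝ) ≤ n := by exact_mod_cast hmn n
    have hgrid : ∀ k : ℕ, k ≤ M → ((k:ℝ)/n) ∈ Set.Icc (0:ℝ) 1 := by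
      intro k hk
      refine ⟨by positivity, ?_⟩
      rw [div_le_one hn0]
      exact le_trans (by exact_mod_cast hk) hMn'
    rw [Real.norm_eq_abs,
      abel_aux (fun j => G ((j:ℝ)/n)) (fun j => ψ j - η) M]
    have hX : |G ((M:ℝ)/n)| * |∑ j ∈ Finset.Icc 1 M, (ψ j - η)| ≤ B * ((n:ℝ) * v M) := by
      apply mul_le_mul (hGb _ (hgrid M le_rfl)) ?_ (abs_nonneg _) hBnn
      rw [hTv' M hM1]
      exact mul_le_mul_of_nonneg_right hMn' (hvnn M)
    have hY : |∑ j ∈ Finset.Ico 1 M,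
          (G (((j+1:ℕ):ℝ)/n) - G ((j:ℝ)/n)) * ∑ i ∈ Finset.Icc 1 j, (ψ i - η)|
        ≤ (K:ℝ) * ∑ j ∈ Finset.Icc 1 n, v j := by
      refine le_trans (Finset.abs_sum_le_sum_abs _ _) ?_
      have hterm : ∀ j ∈ Finset.Ico 1 M,
          |(G (((j+1:ℕ):ℝ)/n) - G ((j:ℝ)/n)) * ∑ i ∈ Finset.Icc 1 j, (ψ i - η)|
            ≤ (K:ℝ) * v j := by
        intro j hj
        rw [Finset.mem_Ico] at hj
        have hj1 : 1 ≤ j := hj.1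
        have hjM : j + 1 ≤ M := hj.2
        rw [abs_mul]
        have hd : |G (((j+1:ℕ):ℝ)/n) - G ((j:ℝ)/n)| ≤ (K:ℝ) * (1/n) := by
          have h1 := hG.dist_le_mul _ (hgrid (j+1) hjM) _ (hgrid j (by omega))
          rw [Real.dist_eq, Real.dist_eq] at h1
          refine le_trans h1 ?_
          have heq : (((j+1:ℕ)):ℝ)/n - (j:ℝ)/n = 1/n := by
            push_cast
            field_simp
            ring
          rw [heq, abs_of_pos (by positivity : (0:ℝ) < 1/(n:ℝ))]
        have hT2 : |∑ i ∈ Finset.Icc 1 j, (ψ i - η)| ≤ (n:ℝ) * v j := by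
          rw [hTv' j hj1]
          have : (j:ℝ) ≤ n := le_trans (by exact_mod_cast Nat.le_of_lt_succ (by omega)) hMn'
          exact mul_le_mul_of_nonneg_right this (hvnn j)
        calc |G (((j+1:ℕ):ℝ)/n) - G ((j:ℝ)/n)| * |∑ i ∈ Finset.Icc 1 j, (ψ i - η)|
            ≤ ((K:ℝ) * (1/n)) * ((n:ℝ) * v j) := by
              apply mul_le_mul hd hT2 (abs_nonneg _) (by positivity)
          _ = (K:ℝ) * v j := by field_simp
      calc ∑ j ∈ Finset.Ico 1 M,
            |(G (((j+1:ℕ):ℝ)/n) - G ((j:ℝ)/n)) * ∑ i ∈ Finset.Icc 1 j, (ψ i - η)|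
          ≤ ∑ j ∈ Finset.Ico 1 M, (K:ℝ) * v j := Finset.sum_le_sum hterm
        _ ≤ ∑ j ∈ Finset.Icc 1 n, (K:ℝ) * v j := by
            apply Finset.sum_le_sum_of_subset_of_nonneg
            · intro j hj
              rw [Finset.mem_Ico] at hj
              rw [Finset.mem_Icc]
              exact ⟨hj.1, le_trans (Nat.le_of_lt_succ (by omega)) (hmn n)⟩
            · intro j _ _
              have := hvnn j
              positivity
        _ = (K:ℝ) * ∑ j ∈ Finset.Icc 1 n, v j := by rw [Finset.mul_sum]
    calc |(1/(n:ℝ)) * ((fun j : ℕ => G ((j:ℝ)/n)) M * (∑ j ∈ Finset.Icc 1 M, (ψ j - η))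
            - ∑ j ∈ Finset.Ico 1 M, ((fun j : ℕ => G ((j:ℝ)/n)) (j+1)
                - (fun j : ℕ => G ((j:ℝ)/n)) j) * ∑ i ∈ Finset.Icc 1 j, (ψ i - η))|
        = (1/(n:ℝ)) * |G ((M:ℝ)/n) * (∑ j ∈ Finset.Icc 1 M, (ψ j - η))
            - ∑ j ∈ Finset.Ico 1 M, (G (((j+1:ℕ):ℝ)/n)
                - G ((j:ℝ)/n)) * ∑ i ∈ Finset.Icc 1 j, (ψ i - η)| := by
          rw [abs_mul, abs_of_pos (by positivity : (0:ℝ) < 1/(n:ℝ))]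
      _ ≤ (1/(n:ℝ)) * (|G ((M:ℝ)/n) * (∑ j ∈ Finset.Icc 1 M, (ψ j - η))|
            + |∑ j ∈ Finset.Ico 1 M, (G (((j+1:ℕ):ℝ)/n)
                - G ((j:ℝ)/n)) * ∑ i ∈ Finset.Icc 1 j, (ψ i - η)|) := by
          apply mul_le_mul_of_nonneg_left (abs_sub _ _) (by positivity)
      _ ≤ (1/(n:ℝ)) * (B * ((n:ℝ) * v M) + (K:ℝ) * ∑ j ∈ Finset.Icc 1 n, v j) := by
          apply mul_le_mul_of_nonneg_left ?_ (by positivity)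
          apply add_le_add ?_ hY
          rw [abs_mul]
          exact hX
      _ ≤ B * v M + (K:ℝ) * ((1/(n:ℝ)) * ∑ j ∈ Finset.Icc 1 n, v j) := by
          rw [mul_add]
          apply add_le_add
          · apply le_of_eq
            field_simp
          · apply le_of_eq
            ring
  have hfin := (tendsto_const_nhds (x := η)).mul hA |>.add hD
  rw [add_zero] at hfin
  refine hfin.congr (fun n => ?_)
  have hsplit2 : ∀ j : ℕ, G ((j:ℝ)/n) * ψ j
      = G ((j:ℝ)/n) * (ψ j - η) + η * G ((j:ℝ)/n) := by
    intro j; ring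
  simp only [hsplit2, Finset.sum_add_distrib, ← Finset.mul_sum]
  ring
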